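/- arXiv:2605.24058 — 3 statements merged into one kernel-verified Lean document; each statement's English description precedes it below -/
import Mathlib

section
/- Under the sign-plus-noise model with deterministic ±1 sign arrays and mutually independent mean-zero residuals each with second moment at most ζ², the entrywise residual E_{ij} = (AB^T)_{ij} − μ_A μ_B Σ_k σ^A_{ik} σ^B_{jk} satisfies E[E_{ij}²] ≤ r·ζ²·(μ_A² + μ_B² + ζ²), and hence E[||E||_F²] ≤ N·M·r·ζ²·(μ_A² + μ_B² + ζ²). -/
open MeasureTheory ProbabilityTheory

private lemma iIndepFun_congr_ae {Ω ι : Type*} [MeasurableSpace Ω] {μ : Measure Ω}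
    {f g : ι → Ω → ℝ} (h : iIndepFun f μ)
    (heq : ∀ i, f i =ᵐ[μ] g i) : iIndepFun g μ := by
  rw [iIndepFun_iff_measure_inter_preimage_eq_mul] at h ⊢
  intro S sets hsets
  have hp : ∀ i, μ (f i ⁻¹' sets i) = μ (g i ⁻¹' sets i) := by
    intro i
    apply measure_congr
    rw [Filter.eventuallyEq_set]
    filter_upwards [heq i] with ω hω
    simp [Set.mem_preimage, hω]
  have h2 : μ (⋂ i ∈ S, g i ⁻¹' sets i) = μ (⋂ i ∈ S, f i ⁻¹' sets i) := by
    apply measure_congr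
    rw [Filter.eventuallyEq_set]
    have hae : ∀ᵐ ω ∂μ, ∀ i ∈ S, f i ω = g i ω :=
      (ae_ball_iff S.countable_toSet).2 fun i _ => heq i
    filter_upwards [hae] with ω hω
    simp only [Set.mem_iInter, Set.mem_preimage]
    exact forall₂_congr fun i hi => by rw [hω i hi]
  rw [h2, h S hsets]
  exact Finset.prod_congr rfl fun i _ => hp i

/-- Second-moment bound on the entrywise residual in the sign-plus-noise model:
`E[E_{ij}²] ≤ r·ζ²·(μA² + μB² + ζ²)`, hence
`E[‖E‖_F²] ≤ N·M·r·ζ²·(μA² + μB² + ζ²)`. -/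
theorem residual_second_moment
    {Ω : Type*} [MeasurableSpace Ω] (μ : Measure Ω) [IsProbabilityMeasure μ]
    (N M r : ℕ) (μA μB ζ : ℝ) (hμA : 0 < μA) (hμB : 0 < μB) (hζ : 0 < ζ)
    (σA : Fin N → Fin r → ℝ) (σB : Fin M → Fin r → ℝ)
    (hσA : ∀ i k, σA i k = 1 ∨ σA i k = -1)
    (hσB : ∀ j k, σB j k = 1 ∨ σB j k = -1)
    (ξ : (Fin N × Fin r) ⊕ (Fin M × Fin r) → Ω → ℝ)
    (hindep : iIndepFun ξ μ)
    (hL2 : ∀ idx, MemLp (ξ idx) 2 μ)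
    (hmean : ∀ idx, ∫ ω, ξ idx ω ∂μ = 0)
    (hvar : ∀ idx, ∫ ω, (ξ idx ω) ^ 2 ∂μ ≤ ζ ^ 2)
    (A : Fin N → Fin r → Ω → ℝ) (B : Fin M → Fin r → Ω → ℝ)
    (hA : ∀ i k ω, A i k ω = μA * σA i k + ξ (Sum.inl (i, k)) ω)
    (hB : ∀ j k ω, B j k ω = μB * σB j k + ξ (Sum.inr (j, k)) ω)
    (E : Fin N → Fin M → Ω → ℝ)
    (hE : ∀ i j ω, E i j ω =
      (∑ k, A i k ω * B j k ω) - μA * μB * ∑ k, σA i k * σB j k) :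
    (∀ (i : Fin N) (j : Fin M),
        ∫ ω, (E i j ω) ^ 2 ∂μ ≤ r * ζ ^ 2 * (μA ^ 2 + μB ^ 2 + ζ ^ 2)) ∧
      ∫ ω, (∑ i, ∑ j, (E i j ω) ^ 2) ∂μ ≤
        N * M * r * ζ ^ 2 * (μA ^ 2 + μB ^ 2 + ζ ^ 2) := by
  classical
  -- measurable modification of ξ
  set ξ' : (Fin N × Fin r) ⊕ (Fin M × Fin r) → Ω → ℝ :=
    fun idx => (hL2 idx).1.mk (ξ idx) with hξ'def
  have hξae : ∀ idx, ξ idx =ᵐ[μ] ξ' idx := fun idx => (hL2 idx).1.ae_eq_mk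
  have hξm : ∀ idx, Measurable (ξ' idx) :=
    fun idx => (hL2 idx).1.stronglyMeasurable_mk.measurable
  have hindep' : iIndepFun ξ' μ := iIndepFun_congr_ae hindep hξae
  have hL2' : ∀ idx, MemLp (ξ' idx) 2 μ := fun idx => (hL2 idx).ae_eq (hξae idx)
  have hmean' : ∀ idx, ∫ ω, ξ' idx ω ∂μ = 0 := fun idx => by
    rw [← integral_congr_ae (hξae idx)]; exact hmean idx
  have hvar' : ∀ idx, ∫ ω, (ξ' idx ω) ^ 2 ∂μ ≤ ζ ^ 2 := fun idx => by
    have h : (fun ω => ξ' idx ω ^ 2) =ᵐ[μ] (fun ω => ξ idx ω ^ 2) := by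
      filter_upwards [hξae idx] with ω hω
      rw [hω]
    rw [integral_congr_ae h]
    exact hvar idx
  set C : ℝ := ζ ^ 2 * (μA ^ 2 + μB ^ 2 + ζ ^ 2) with hC
  have key : ∀ (i : Fin N) (j : Fin M),
      Integrable (fun ω => (E i j ω) ^ 2) μ ∧ ∫ ω, (E i j ω) ^ 2 ∂μ ≤ r * C := by
    intro i j
    set a : Fin r → Ω → ℝ := fun k => ξ' (Sum.inl (i, k)) with ha
    set b : Fin r → Ω → ℝ := fun k => ξ' (Sum.inr (j, k)) with hb
    set X : Fin r → Ω → ℝ := fun k ω =>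
      μA * σA i k * b k ω + μB * σB j k * a k ω + a k ω * b k ω with hX
    have ia : ∀ k, Integrable (a k) μ := fun k => (hL2' _).integrable one_le_two
    have ib : ∀ k, Integrable (b k) μ := fun k => (hL2' _).integrable one_le_two
    have ia2 : ∀ k, Integrable (fun ω => a k ω ^ 2) μ := fun k => (hL2' _).integrable_sq
    have ib2 : ∀ k, Integrable (fun ω => b k ω ^ 2) μ := fun k => (hL2' _).integrable_sq
    have indab : ∀ k l, IndepFun (a k) (b l) μ :=
      fun k l => hindep'.indepFun (by simp)
    have indab2 : ∀ k l, IndepFun (a k) (fun ω => b l ω ^ 2) μ :=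
      fun k l => (indab k l).comp measurable_id (measurable_id.pow_const 2)
    have inda2b : ∀ k l, IndepFun (fun ω => a k ω ^ 2) (b l) μ :=
      fun k l => (indab k l).comp (measurable_id.pow_const 2) measurable_id
    have inda2b2 : ∀ k l, IndepFun (fun ω => a k ω ^ 2) (fun ω => b l ω ^ 2) μ :=
      fun k l => (indab k l).comp (measurable_id.pow_const 2) (measurable_id.pow_const 2)
    have iab : ∀ k l, Integrable (fun ω => a k ω * b l ω) μ :=
      fun k l => (indab k l).integrable_mul (ia k) (ib l)
    have iab2 : ∀ k l, Integrable (fun ω => a k ω * b l ω ^ 2) μ :=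
      fun k l => (indab2 k l).integrable_mul (ia k) (ib2 l)
    have ia2b : ∀ k l, Integrable (fun ω => a k ω ^ 2 * b l ω) μ :=
      fun k l => (inda2b k l).integrable_mul (ia2 k) (ib l)
    have ia2b2 : ∀ k l, Integrable (fun ω => a k ω ^ 2 * b l ω ^ 2) μ :=
      fun k l => (inda2b2 k l).integrable_mul (ia2 k) (ib2 l)
    have ma0 : ∀ k, ∫ ω, a k ω ∂μ = 0 := fun k => hmean' _
    have mb0 : ∀ k, ∫ ω, b k ω ∂μ = 0 := fun k => hmean' _
    have mab0 : ∀ k l, ∫ ω, a k ω * b l ω ∂μ = 0 := fun k l => by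
      have h := (indab k l).integral_mul_eq_mul_integral (ia k).1 (ib l).1
      rw [ma0 k, zero_mul] at h
      exact h
    have mab20 : ∀ k l, ∫ ω, a k ω * b l ω ^ 2 ∂μ = 0 := fun k l => by
      have h := (indab2 k l).integral_mul_eq_mul_integral (ia k).1 (ib2 l).1
      rw [ma0 k, zero_mul] at h
      exact h
    have ma2b0 : ∀ k l, ∫ ω, a k ω ^ 2 * b l ω ∂μ = 0 := fun k l => by
      have h := (inda2b k l).integral_mul_eq_mul_integral (ia2 k).1 (ib l).1
      rw [mb0 l, mul_zero] at h
      exact h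
    have ma2b2 : ∀ k l, ∫ ω, a k ω ^ 2 * b l ω ^ 2 ∂μ
        = (∫ ω, a k ω ^ 2 ∂μ) * (∫ ω, b l ω ^ 2 ∂μ) := fun k l =>
      (inda2b2 k l).integral_mul_eq_mul_integral (ia2 k).1 (ib2 l).1
    have expand0 : ∀ k ω, X k ω ^ 2 =
        μA ^ 2 * (σA i k) ^ 2 * (b k ω ^ 2) + μB ^ 2 * (σB j k) ^ 2 * (a k ω ^ 2)
          + (a k ω ^ 2 * b k ω ^ 2)
          + (2 * μA * μB * (σA i k) * (σB j k)) * (a k ω * b k ω)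
          + (2 * μA * (σA i k)) * (a k ω * b k ω ^ 2)
          + (2 * μB * (σB j k)) * (a k ω ^ 2 * b k ω) := by
      intro k ω
      simp only [hX]
      ring
    have iXsq : ∀ k, Integrable (fun ω => X k ω ^ 2) μ := by
      intro k
      rw [show (fun ω => X k ω ^ 2) = _ from funext (expand0 k)]
      exact ((((((ib2 k).const_mul _).add ((ia2 k).const_mul _)).add (ia2b2 k k)).add
        ((iab k k).const_mul _)).add ((iab2 k k).const_mul _)).add ((ia2b k k).const_mul _)
    have diag : ∀ k, ∫ ω, X k ω ^ 2 ∂μ ≤ C := by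
      intro k
      have hs : σA i k ^ 2 = 1 := by rcases hσA i k with h | h <;> rw [h] <;> norm_num
      have ht : σB j k ^ 2 = 1 := by rcases hσB j k with h | h <;> rw [h] <;> norm_num
      have i1 : Integrable (fun ω => μA ^ 2 * (σA i k) ^ 2 * (b k ω ^ 2)) μ :=
        (ib2 k).const_mul _
      have i2 : Integrable (fun ω => μB ^ 2 * (σB j k) ^ 2 * (a k ω ^ 2)) μ :=
        (ia2 k).const_mul _
      have i3 := ia2b2 k k
      have i4 : Integrable
          (fun ω => (2 * μA * μB * (σA i k) * (σB j k)) * (a k ω * b k ω)) μ :=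
        (iab k k).const_mul _
      have i5 : Integrable (fun ω => (2 * μA * (σA i k)) * (a k ω * b k ω ^ 2)) μ :=
        (iab2 k k).const_mul _
      have i6 : Integrable (fun ω => (2 * μB * (σB j k)) * (a k ω ^ 2 * b k ω)) μ :=
        (ia2b k k).const_mul _
      have j2 : Integrable (fun ω => μA ^ 2 * (σA i k) ^ 2 * (b k ω ^ 2)
          + μB ^ 2 * (σB j k) ^ 2 * (a k ω ^ 2)) μ := i1.add i2
      have j3 : Integrable (fun ω => μA ^ 2 * (σA i k) ^ 2 * (b k ω ^ 2)
          + μB ^ 2 * (σB j k) ^ 2 * (a k ω ^ 2) + (a k ω ^ 2 * b k ω ^ 2)) μ := j2.add i3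
      have j4 : Integrable (fun ω => μA ^ 2 * (σA i k) ^ 2 * (b k ω ^ 2)
          + μB ^ 2 * (σB j k) ^ 2 * (a k ω ^ 2) + (a k ω ^ 2 * b k ω ^ 2)
          + (2 * μA * μB * (σA i k) * (σB j k)) * (a k ω * b k ω)) μ := j3.add i4
      have j5 : Integrable (fun ω => μA ^ 2 * (σA i k) ^ 2 * (b k ω ^ 2)
          + μB ^ 2 * (σB j k) ^ 2 * (a k ω ^ 2) + (a k ω ^ 2 * b k ω ^ 2)
          + (2 * μA * μB * (σA i k) * (σB j k)) * (a k ω * b k ω)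
          + (2 * μA * (σA i k)) * (a k ω * b k ω ^ 2)) μ := j4.add i5
      have hi : ∫ ω, X k ω ^ 2 ∂μ =
          μA ^ 2 * (σA i k) ^ 2 * ∫ ω, b k ω ^ 2 ∂μ
            + μB ^ 2 * (σB j k) ^ 2 * ∫ ω, a k ω ^ 2 ∂μ
            + (∫ ω, a k ω ^ 2 ∂μ) * (∫ ω, b k ω ^ 2 ∂μ) := by
        simp only [expand0]
        rw [integral_add j5 i6, integral_add j4 i5, integral_add j3 i4,
            integral_add j2 i3, integral_add i1 i2,
            integral_const_mul, integral_const_mul, integral_const_mul, integral_const_mul,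
            integral_const_mul, mab0 k k, mab20 k k, ma2b0 k k, ma2b2 k k]
        ring
      rw [hi, hs, ht]
      have hVa : ∫ ω, a k ω ^ 2 ∂μ ≤ ζ ^ 2 := hvar' _
      have hVb : ∫ ω, b k ω ^ 2 ∂μ ≤ ζ ^ 2 := hvar' _
      have hVa0 : 0 ≤ ∫ ω, a k ω ^ 2 ∂μ := integral_nonneg fun ω => sq_nonneg _
      have hVb0 : 0 ≤ ∫ ω, b k ω ^ 2 ∂μ := integral_nonneg fun ω => sq_nonneg _
      rw [hC]
      nlinarith [mul_nonneg (sq_nonneg μA) (sub_nonneg.2 hVb),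
        mul_nonneg (sq_nonneg μB) (sub_nonneg.2 hVa),
        mul_le_mul hVa hVb hVb0 (le_of_lt (by positivity : (0:ℝ) < ζ ^ 2))]
    have iX : ∀ k, Integrable (X k) μ := fun k =>
      (((ib k).const_mul _).add ((ia k).const_mul _)).add (iab k k)
    have intX0 : ∀ k, ∫ ω, X k ω ∂μ = 0 := by
      intro k
      have c1 : Integrable (fun ω => μA * σA i k * b k ω) μ := (ib k).const_mul _
      have c2 : Integrable (fun ω => μB * σB j k * a k ω) μ := (ia k).const_mul _
      have c12 : Integrable (fun ω => μA * σA i k * b k ω + μB * σB j k * a k ω) μ := c1.add c2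
      simp only [hX]
      rw [integral_add c12 (iab k k), integral_add c1 c2,
          integral_const_mul, integral_const_mul, ma0 k, mb0 k, mab0 k k]
      ring
    have indX : ∀ k l, k ≠ l → IndepFun (X k) (X l) μ := by
      intro k l hkl
      have h4 := hindep'.indepFun_prodMk_prodMk hξm
        (Sum.inl (i, k)) (Sum.inr (j, k)) (Sum.inl (i, l)) (Sum.inr (j, l))
        (by simp [hkl]) (by simp) (by simp) (by simp [hkl])
      have hφ : ∀ s t : ℝ,
          Measurable (fun p : ℝ × ℝ => μA * s * p.2 + μB * t * p.1 + p.1 * p.2) := by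
        intro s t; fun_prop
      exact h4.comp (hφ (σA i k) (σB j k)) (hφ (σA i l) (σB j l))
    have off : ∀ k l, k ≠ l → ∫ ω, X k ω * X l ω ∂μ = 0 := fun k l hkl => by
      have h := (indX k l hkl).integral_mul_eq_mul_integral (iX k).1 (iX l).1
      rw [intX0 k, zero_mul] at h
      exact h
    have iXX : ∀ k l, Integrable (fun ω => X k ω * X l ω) μ := by
      intro k l
      by_cases hkl : k = l
      · subst hkl
        have h := iXsq k
        simp only [pow_two] at h
        exact h
      · exact (indX k l hkl).integrable_mul (iX k) (iX l)
    have hEae : (fun ω => E i j ω) =ᵐ[μ] (fun ω => ∑ k, X k ω) := by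
      have hall : ∀ᵐ ω ∂μ, ∀ idx, ξ idx ω = ξ' idx ω := ae_all_iff.2 hξae
      filter_upwards [hall] with ω hω
      rw [hE i j ω]
      have hterm : ∀ k, A i k ω * B j k ω = μA * μB * (σA i k * σB j k) + X k ω := by
        intro k
        rw [hA i k ω, hB j k ω, hω (Sum.inl (i, k)), hω (Sum.inr (j, k))]
        simp only [hX, ha, hb]
        ring
      rw [Finset.sum_congr rfl fun k _ => hterm k, Finset.sum_add_distrib, ← Finset.mul_sum]
      ring
    have hEsq : (fun ω => E i j ω ^ 2) =ᵐ[μ] (fun ω => ∑ k, ∑ l, X k ω * X l ω) := by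
      filter_upwards [hEae] with ω hω
      rw [hω, sq, Finset.sum_mul_sum]
    have hint : Integrable (fun ω => ∑ k, ∑ l, X k ω * X l ω) μ :=
      integrable_finset_sum _ fun k _ => integrable_finset_sum _ fun l _ => iXX k l
    refine ⟨hint.congr hEsq.symm, ?_⟩
    rw [integral_congr_ae hEsq,
      integral_finset_sum _ fun k _ => integrable_finset_sum _ fun l _ => iXX k l]
    have step : ∀ k : Fin r, (∫ ω, ∑ l, X k ω * X l ω ∂μ) ≤ C := by
      intro k
      rw [integral_finset_sum _ fun l _ => iXX k l,
        Finset.sum_eq_single k (fun l _ hlk => off k l hlk.symm)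
          (fun hk => absurd (Finset.mem_univ k) hk)]
      calc ∫ ω, X k ω * X k ω ∂μ = ∫ ω, X k ω ^ 2 ∂μ := by simp only [← pow_two]
        _ ≤ C := diag k
    calc ∑ k : Fin r, ∫ ω, ∑ l, X k ω * X l ω ∂μ ≤ ∑ _k : Fin r, C :=
          Finset.sum_le_sum fun k _ => step k
      _ = r * C := by
          simp [Finset.sum_const, Finset.card_univ, nsmul_eq_mul]
  refine ⟨fun i j => ?_, ?_⟩
  · calc ∫ ω, (E i j ω) ^ 2 ∂μ ≤ r * C := (key i j).2
      _ = r * ζ ^ 2 * (μA ^ 2 + μB ^ 2 + ζ ^ 2) := by rw [hC]; ring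
  · rw [integral_finset_sum _ fun i _ => integrable_finset_sum _ fun j _ => (key i j).1]
    calc ∑ i : Fin N, ∫ ω, ∑ j, (E i j ω) ^ 2 ∂μ
        = ∑ i : Fin N, ∑ j : Fin M, ∫ ω, (E i j ω) ^ 2 ∂μ :=
          Finset.sum_congr rfl fun i _ =>
            integral_finset_sum _ fun j _ => (key i j).1
      _ ≤ ∑ _i : Fin N, ∑ _j : Fin M, (r * C) :=
          Finset.sum_le_sum fun i _ => Finset.sum_le_sum fun j _ => (key i j).2
      _ = N * M * r * ζ ^ 2 * (μA ^ 2 + μB ^ 2 + ζ ^ 2) := by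
          simp [Finset.sum_const, Finset.card_univ, nsmul_eq_mul, hC]
          ring
end

section
/- With σ^A ∈ {±1}^{N×r} and σ^B ∈ {±1}^{M×r} jointly i.i.d. Rademacher and independent of each other, define W_{ij} = Σ_k σ^A_{ik} σ^B_{jk} and Z = Σ_{i,j} W_{ij}². Then Var(Z) = 2·r·(r−1)·N·M. -/
open MeasureTheory ProbabilityTheory

section Aux

variable {Ω : Type*} [MeasurableSpace Ω] {μ : Measure Ω} [IsProbabilityMeasure μ]
  {ι : Type*} {σ : ι → Ω → ℝ}

lemma aux_sq (hpm : ∀ p ω, σ p ω = 1 ∨ σ p ω = -1) (p : ι) (ω : Ω) :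
    σ p ω * σ p ω = 1 := by rcases hpm p ω with h | h <;> rw [h] <;> norm_num

lemma aux_abs (hpm : ∀ p ω, σ p ω = 1 ∨ σ p ω = -1) (p : ι) (ω : Ω) :
    |σ p ω| = 1 := by rcases hpm p ω with h | h <;> simp [h]

lemma aux_int {f : Ω → ℝ} (hm : Measurable f) (hb : ∀ ω, |f ω| ≤ 1) :
    Integrable f μ :=
  (memLp_top_of_bound hm.aestronglyMeasurable 1
    (Filter.Eventually.of_forall (by simpa [Real.norm_eq_abs] using hb))).integrable le_top

lemma aux_mean (hmeas : ∀ p, Measurable (σ p)) (hpm : ∀ p ω, σ p ω = 1 ∨ σ p ω = -1)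
    (hhalf : ∀ p, μ {ω | σ p ω = 1} = 1 / 2) (p : ι) :
    ∫ ω, σ p ω ∂μ = 0 := by
  have hA : MeasurableSet {ω | σ p ω = 1} := (hmeas p) (measurableSet_singleton 1)
  have hfun : ∀ ω, σ p ω = 2 * Set.indicator {ω | σ p ω = 1} (fun _ => (1:ℝ)) ω - 1 := by
    intro ω
    by_cases h : σ p ω = 1
    · rw [Set.indicator_of_mem (by simpa using h), h]; norm_num
    · rcases hpm p ω with h1 | h1
      · exact absurd h1 h
      · rw [Set.indicator_of_notMem (by simpa using h), h1]; norm_num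
  rw [integral_congr_ae (Filter.Eventually.of_forall hfun)]
  have hind : Integrable (Set.indicator {ω | σ p ω = 1} (fun _ => (1:ℝ))) μ :=
    (integrable_const (1:ℝ)).indicator hA
  rw [integral_sub ((hind.const_mul 2)) (integrable_const 1), integral_const_mul 2,
    integral_indicator_const (1:ℝ) hA, measureReal_def, hhalf p]
  simp

lemma aux_E2 (hindep : iIndepFun σ μ)
    (hmeas : ∀ p, Measurable (σ p)) (hpm : ∀ p ω, σ p ω = 1 ∨ σ p ω = -1)
    (hhalf : ∀ p, μ {ω | σ p ω = 1} = 1 / 2) {p q : ι} (hpq : p ≠ q) :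
    ∫ ω, σ p ω * σ q ω ∂μ = 0 := by
  have h := (hindep.indepFun hpq).integral_mul_eq_mul_integral
      (aux_int (hmeas p) (fun ω => le_of_eq (aux_abs hpm p ω))).aestronglyMeasurable
      (aux_int (hmeas q) (fun ω => le_of_eq (aux_abs hpm q ω))).aestronglyMeasurable
  calc ∫ ω, σ p ω * σ q ω ∂μ = ∫ ω, (σ p * σ q) ω ∂μ := rfl
    _ = (∫ ω, σ p ω ∂μ) * ∫ ω, σ q ω ∂μ := h
    _ = 0 := by rw [aux_mean hmeas hpm hhalf p, zero_mul]

open scoped Classical in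
lemma aux_E4 (hindep : iIndepFun σ μ)
    (hmeas : ∀ p, Measurable (σ p)) (hpm : ∀ p ω, σ p ω = 1 ∨ σ p ω = -1)
    (hhalf : ∀ p, μ {ω | σ p ω = 1} = 1 / 2) (p1 p2 p3 p4 : ι)
    (h12 : p1 ≠ p2) (h34 : p3 ≠ p4) :
    ∫ ω, σ p1 ω * σ p2 ω * (σ p3 ω * σ p4 ω) ∂μ
      = if (p1 = p3 ∧ p2 = p4) ∨ (p1 = p4 ∧ p2 = p3) then 1 else 0 := by
  by_cases hm : (p1 = p3 ∧ p2 = p4) ∨ (p1 = p4 ∧ p2 = p3)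
  · rw [if_pos hm]
    have h1 : ∀ ω, σ p1 ω * σ p2 ω * (σ p3 ω * σ p4 ω) = 1 := by
      intro ω
      rcases hm with ⟨h3, h4⟩ | ⟨h4, h3⟩
      · subst h3; subst h4
        linear_combination (σ p2 ω * σ p2 ω) * aux_sq hpm p1 ω + aux_sq hpm p2 ω
      · subst h3; subst h4
        linear_combination (σ p2 ω * σ p2 ω) * aux_sq hpm p1 ω + aux_sq hpm p2 ω
    simp only [h1, integral_const, measure_univ, ENNReal.toReal_one, probReal_univ, smul_eq_mul, mul_one,
      one_smul]
  · rw [if_neg hm]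
    by_cases h13 : p1 = p3
    · have h24 : p2 ≠ p4 := fun h => hm (Or.inl ⟨h13, h⟩)
      subst h13
      have hp : ∀ ω, σ p1 ω * σ p2 ω * (σ p1 ω * σ p4 ω) = σ p2 ω * σ p4 ω := fun ω => by
        linear_combination (σ p2 ω * σ p4 ω) * aux_sq hpm p1 ω
      simp only [hp]
      exact aux_E2 hindep hmeas hpm hhalf h24
    by_cases h14 : p1 = p4
    · have h23 : p2 ≠ p3 := fun h => hm (Or.inr ⟨h14, h⟩)
      subst h14
      have hp : ∀ ω, σ p1 ω * σ p2 ω * (σ p3 ω * σ p1 ω) = σ p2 ω * σ p3 ω := fun ω => by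
        linear_combination (σ p2 ω * σ p3 ω) * aux_sq hpm p1 ω
      simp only [hp]
      exact aux_E2 hindep hmeas hpm hhalf h23
    by_cases h23 : p2 = p3
    · subst h23
      have hp : ∀ ω, σ p1 ω * σ p2 ω * (σ p2 ω * σ p4 ω) = σ p1 ω * σ p4 ω := fun ω => by
        linear_combination (σ p1 ω * σ p4 ω) * aux_sq hpm p2 ω
      simp only [hp]
      exact aux_E2 hindep hmeas hpm hhalf h14
    by_cases h24 : p2 = p4
    · subst h24
      have hp : ∀ ω, σ p1 ω * σ p2 ω * (σ p3 ω * σ p2 ω) = σ p1 ω * σ p3 ω := fun ω => by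
        linear_combination (σ p1 ω * σ p3 ω) * aux_sq hpm p2 ω
      simp only [hp]
      exact aux_E2 hindep hmeas hpm hhalf h13
    · have hI := (hindep.indepFun_mul_mul hmeas p1 p2 p3 p4 h13 h14 h23 h24).integral_mul_eq_mul_integral
        (aux_int ((hmeas p1).mul (hmeas p2))
          (fun ω => by rw [Pi.mul_apply, abs_mul, aux_abs hpm, aux_abs hpm]; norm_num)).aestronglyMeasurable
        (aux_int ((hmeas p3).mul (hmeas p4))
          (fun ω => by rw [Pi.mul_apply, abs_mul, aux_abs hpm, aux_abs hpm]; norm_num)).aestronglyMeasurable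
      calc ∫ ω, σ p1 ω * σ p2 ω * (σ p3 ω * σ p4 ω) ∂μ
          = ∫ ω, ((σ p1 * σ p2) * (σ p3 * σ p4)) ω ∂μ := rfl
        _ = (∫ ω, σ p1 ω * σ p2 ω ∂μ) * ∫ ω, σ p3 ω * σ p4 ω ∂μ := hI
        _ = 0 := by
            rw [aux_E2 hindep hmeas hpm hhalf h12, zero_mul]

lemma aux_int4 (hmeas : ∀ p, Measurable (σ p)) (hpm : ∀ p ω, σ p ω = 1 ∨ σ p ω = -1)
    (p1 p2 p3 p4 : ι) :
    Integrable (fun ω => σ p1 ω * σ p2 ω * (σ p3 ω * σ p4 ω)) μ :=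
  aux_int (((hmeas p1).mul (hmeas p2)).mul ((hmeas p3).mul (hmeas p4)))
    (fun ω => by
      rw [abs_mul, abs_mul, abs_mul, aux_abs hpm, aux_abs hpm, aux_abs hpm, aux_abs hpm]
      norm_num)

lemma aux_indep4 (hindep : iIndepFun σ μ)
    (hmeas : ∀ p, Measurable (σ p)) (a1 a2 a3 a4 b1 b2 b3 b4 : ι)
    (h : ∀ x y : ι, (x = a1 ∨ x = a2 ∨ x = a3 ∨ x = a4) →
      (y = b1 ∨ y = b2 ∨ y = b3 ∨ y = b4) → x ≠ y) :
    IndepFun (fun ω => σ a1 ω * σ a2 ω * (σ a3 ω * σ a4 ω))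
      (fun ω => σ b1 ω * σ b2 ω * (σ b3 ω * σ b4 ω)) μ := by
  classical
  have hST : Disjoint ({a1, a2, a3, a4} : Finset ι) ({b1, b2, b3, b4} : Finset ι) := by
    rw [Finset.disjoint_left]
    intro x hxS hxT
    simp only [Finset.mem_insert, Finset.mem_singleton] at hxS hxT
    exact h x x hxS hxT rfl
  have hbase := hindep.indepFun_finset ({a1, a2, a3, a4} : Finset ι)
    ({b1, b2, b3, b4} : Finset ι) hST hmeas
  have ma1 : a1 ∈ ({a1, a2, a3, a4} : Finset ι) := by simp
  have ma2 : a2 ∈ ({a1, a2, a3, a4} : Finset ι) := by simp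
  have ma3 : a3 ∈ ({a1, a2, a3, a4} : Finset ι) := by simp
  have ma4 : a4 ∈ ({a1, a2, a3, a4} : Finset ι) := by simp
  have mb1 : b1 ∈ ({b1, b2, b3, b4} : Finset ι) := by simp
  have mb2 : b2 ∈ ({b1, b2, b3, b4} : Finset ι) := by simp
  have mb3 : b3 ∈ ({b1, b2, b3, b4} : Finset ι) := by simp
  have mb4 : b4 ∈ ({b1, b2, b3, b4} : Finset ι) := by simp
  have hgS : Measurable (fun v : (({a1, a2, a3, a4} : Finset ι) → ℝ) =>
      v ⟨a1, ma1⟩ * v ⟨a2, ma2⟩ * (v ⟨a3, ma3⟩ * v ⟨a4, ma4⟩)) := by fun_prop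
  have hgT : Measurable (fun v : (({b1, b2, b3, b4} : Finset ι) → ℝ) =>
      v ⟨b1, mb1⟩ * v ⟨b2, mb2⟩ * (v ⟨b3, mb3⟩ * v ⟨b4, mb4⟩)) := by fun_prop
  exact hbase.comp hgS hgT

end Aux

lemma aux_count {α β γ : Type*} [DecidableEq α] [DecidableEq β] [DecidableEq γ]
    (i i' : α) (j j' : β) (k l k' l' : γ)
    (hkl : k ≠ l) (hkl' : k' ≠ l') :
    (if ((i = i' ∧ k = k') ∧ (i = i' ∧ l = l')) ∨ ((i = i' ∧ k = l') ∧ (i = i' ∧ l = k'))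
        then (1:ℝ) else 0)
      * (if ((j = j' ∧ k = k') ∧ (j = j' ∧ l = l')) ∨ ((j = j' ∧ k = l') ∧ (j = j' ∧ l = k'))
        then (1:ℝ) else 0)
    = (if (i' = i ∧ j' = j) ∧ (k' = k ∧ l' = l) then (1:ℝ) else 0)
      + (if (i' = i ∧ j' = j) ∧ (k' = l ∧ l' = k) then (1:ℝ) else 0) := by
  by_cases hii : i = i' <;> by_cases hjj : j = j' <;> by_cases h1 : k = k' <;>
    by_cases h2 : l = l' <;> by_cases h3 : k = l' <;> by_cases h4 : l = k' <;>
    simp_all [eq_comm]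

/-- With jointly i.i.d. Rademacher arrays `σᴬ ∈ {±1}^{N×r}`, `σᴮ ∈ {±1}^{M×r}`,
`W_{ij} = Σ_k σᴬ_{ik} σᴮ_{jk}` and `Z = Σ_{ij} W_{ij}²` satisfy
`Var(Z) = 2·r·(r−1)·N·M`. -/
theorem rademacher_bilinear_variance
    {Ω : Type*} [MeasurableSpace Ω] (μ : Measure Ω) [IsProbabilityMeasure μ]
    (N M r : ℕ)
    (σ : (Fin N × Fin r) ⊕ (Fin M × Fin r) → Ω → ℝ)
    (hindep : iIndepFun σ μ)
    (hmeas : ∀ idx, Measurable (σ idx))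
    (hpm : ∀ idx ω, σ idx ω = 1 ∨ σ idx ω = -1)
    (hhalf : ∀ idx, μ {ω | σ idx ω = 1} = 1 / 2)
    (W : Fin N → Fin M → Ω → ℝ)
    (hW : ∀ i j ω, W i j ω = ∑ k, σ (Sum.inl (i, k)) ω * σ (Sum.inr (j, k)) ω)
    (Z : Ω → ℝ) (hZ : ∀ ω, Z ω = ∑ i, ∑ j, (W i j ω) ^ 2) :
    ∫ ω, (Z ω - ∫ ω', Z ω' ∂μ) ^ 2 ∂μ = 2 * r * (r - 1) * N * M := by
  classical
  set Y : (Fin N × Fin M) × (Fin r × Fin r) → Ω → ℝ :=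
    fun t ω => σ (Sum.inl (t.1.1, t.2.1)) ω * σ (Sum.inr (t.1.2, t.2.1)) ω *
      (σ (Sum.inl (t.1.1, t.2.2)) ω * σ (Sum.inr (t.1.2, t.2.2)) ω) with hY
  set T : Finset ((Fin N × Fin M) × (Fin r × Fin r)) :=
    Finset.univ ×ˢ Finset.univ.offDiag with hT
  have hbY : ∀ t ω, |Y t ω| ≤ 1 := by
    intro t ω
    simp only [hY]
    rw [abs_mul, abs_mul, abs_mul, aux_abs hpm, aux_abs hpm, aux_abs hpm, aux_abs hpm]
    norm_num
  have hmY : ∀ t, Measurable (Y t) := fun t => by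
    simp only [hY]
    exact ((hmeas _).mul (hmeas _)).mul ((hmeas _).mul (hmeas _))
  have hintY : ∀ t, Integrable (Y t) μ := fun t => aux_int (hmY t) (hbY t)
  have hintYY : ∀ t t', Integrable (fun ω => Y t ω * Y t' ω) μ := fun t t' =>
    aux_int ((hmY t).mul (hmY t')) (fun ω => by
      rw [abs_mul]
      exact mul_le_one₀ (hbY t ω) (abs_nonneg _) (hbY t' ω))
  have hdec : ∀ ω, Z ω = (N : ℝ) * M * r + ∑ t ∈ T, Y t ω := by
    intro ω
    have hW2 : ∀ i j, W i j ω ^ 2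
        = (r : ℝ) + ∑ p ∈ Finset.univ.offDiag, Y ((i, j), p) ω := by
      intro i j
      have hsq2 : W i j ω ^ 2 = ∑ p ∈ ((Finset.univ : Finset (Fin r)) ×ˢ Finset.univ),
          (σ (Sum.inl (i, p.1)) ω * σ (Sum.inr (j, p.1)) ω *
            (σ (Sum.inl (i, p.2)) ω * σ (Sum.inr (j, p.2)) ω)) := by
        rw [hW, sq, Finset.sum_mul_sum, Finset.sum_product]
      rw [hsq2, ← Finset.diag_union_offDiag,
        Finset.sum_union (Finset.disjoint_diag_offDiag _)]
      congr 1
      · have h1 : ∀ p ∈ (Finset.univ : Finset (Fin r)).diag,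
            (σ (Sum.inl (i, p.1)) ω * σ (Sum.inr (j, p.1)) ω *
              (σ (Sum.inl (i, p.2)) ω * σ (Sum.inr (j, p.2)) ω)) = 1 := by
          intro p hp
          obtain ⟨-, hd⟩ := Finset.mem_diag.mp hp
          rw [← hd]
          linear_combination (σ (Sum.inr (j, p.1)) ω * σ (Sum.inr (j, p.1)) ω) *
              aux_sq hpm (Sum.inl (i, p.1)) ω + aux_sq hpm (Sum.inr (j, p.1)) ω
        rw [Finset.sum_congr rfl h1, Finset.sum_const, Finset.diag_card]
        simp
    rw [hZ]
    simp only [hW2]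
    rw [hT, Finset.sum_product, Fintype.sum_prod_type]
    have hrow : ∀ i : Fin N, ∑ j : Fin M, ((r:ℝ) + ∑ p ∈ Finset.univ.offDiag, Y ((i,j),p) ω)
        = (M:ℝ) * r + ∑ j : Fin M, ∑ p ∈ Finset.univ.offDiag, Y ((i,j),p) ω := by
      intro i
      rw [Finset.sum_add_distrib, Finset.sum_const, Finset.card_univ, Fintype.card_fin,
        nsmul_eq_mul]
    simp only [hrow]
    rw [Finset.sum_add_distrib, Finset.sum_const, Finset.card_univ, Fintype.card_fin,
      nsmul_eq_mul, mul_assoc]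
  have hEY : ∀ t ∈ T, ∫ ω, Y t ω ∂μ = 0 := by
    intro t ht
    have hkl : t.2.1 ≠ t.2.2 := (Finset.mem_offDiag.mp (Finset.mem_product.mp ht).2).2.2
    have h := aux_E4 hindep hmeas hpm hhalf (Sum.inl (t.1.1, t.2.1)) (Sum.inr (t.1.2, t.2.1))
      (Sum.inl (t.1.1, t.2.2)) (Sum.inr (t.1.2, t.2.2)) (by simp) (by simp)
    rw [if_neg (by simp [hkl])] at h
    exact h
  have hEZ : ∫ ω, Z ω ∂μ = (N:ℝ) * M * r := by
    rw [integral_congr_ae (Filter.Eventually.of_forall hdec),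
      integral_add (integrable_const _) (integrable_finset_sum _ (fun t _ => hintY t)),
      integral_const, integral_finset_sum _ (fun t _ => hintY t), Finset.sum_eq_zero hEY]
    simp
  rw [hEZ]
  have hptw : ∀ ω, (Z ω - ((N:ℝ) * M * r)) ^ 2 = ∑ t ∈ T, ∑ t' ∈ T, Y t ω * Y t' ω := by
    intro ω
    rw [hdec ω, add_sub_cancel_left, sq, Finset.sum_mul_sum]
  rw [integral_congr_ae (Filter.Eventually.of_forall hptw),
    integral_finset_sum _ (fun t _ => integrable_finset_sum _ (fun t' _ => hintYY t t'))]
  have hEYY : ∀ t ∈ T, ∫ ω, (∑ t' ∈ T, Y t ω * Y t' ω) ∂μ = 2 := by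
    intro t ht
    rw [integral_finset_sum _ (fun t' _ => hintYY t t')]
    obtain ⟨⟨i, j⟩, k, l⟩ := t
    have hkl : k ≠ l := (Finset.mem_offDiag.mp (Finset.mem_product.mp ht).2).2.2
    have hval : ∀ t' ∈ T, ∫ ω, Y ((i,j),(k,l)) ω * Y t' ω ∂μ
        = (if t' = ((i,j),(k,l)) then (1:ℝ) else 0)
          + (if t' = ((i,j),(l,k)) then 1 else 0) := by
      intro t' ht'
      obtain ⟨⟨i', j'⟩, k', l'⟩ := t'
      have hkl' : k' ≠ l' := (Finset.mem_offDiag.mp (Finset.mem_product.mp ht').2).2.2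
      have hre : ∀ ω, Y ((i,j),(k,l)) ω * Y ((i',j'),(k',l')) ω
          = (σ (Sum.inl (i,k)) ω * σ (Sum.inl (i,l)) ω *
              (σ (Sum.inl (i',k')) ω * σ (Sum.inl (i',l')) ω)) *
            (σ (Sum.inr (j,k)) ω * σ (Sum.inr (j,l)) ω *
              (σ (Sum.inr (j',k')) ω * σ (Sum.inr (j',l')) ω)) := by
        intro ω; simp only [hY]; ring
      rw [integral_congr_ae (Filter.Eventually.of_forall hre)]
      have hind := aux_indep4 hindep hmeas (Sum.inl (i,k)) (Sum.inl (i,l)) (Sum.inl (i',k'))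
        (Sum.inl (i',l')) (Sum.inr (j,k)) (Sum.inr (j,l)) (Sum.inr (j',k')) (Sum.inr (j',l'))
        (by rintro x y (rfl|rfl|rfl|rfl) (rfl|rfl|rfl|rfl) <;> simp)
      have hfac : ∫ ω, (σ (Sum.inl (i,k)) ω * σ (Sum.inl (i,l)) ω *
              (σ (Sum.inl (i',k')) ω * σ (Sum.inl (i',l')) ω)) *
            (σ (Sum.inr (j,k)) ω * σ (Sum.inr (j,l)) ω *
              (σ (Sum.inr (j',k')) ω * σ (Sum.inr (j',l')) ω)) ∂μ
          = (∫ ω, σ (Sum.inl (i,k)) ω * σ (Sum.inl (i,l)) ω *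
              (σ (Sum.inl (i',k')) ω * σ (Sum.inl (i',l')) ω) ∂μ) *
            ∫ ω, σ (Sum.inr (j,k)) ω * σ (Sum.inr (j,l)) ω *
              (σ (Sum.inr (j',k')) ω * σ (Sum.inr (j',l')) ω) ∂μ :=
        hind.integral_fun_mul_eq_mul_integral (aux_int4 hmeas hpm _ _ _ _).aestronglyMeasurable
          (aux_int4 hmeas hpm _ _ _ _).aestronglyMeasurable
      rw [hfac,
        aux_E4 hindep hmeas hpm hhalf _ _ _ _ (by simp [hkl]) (by simp [hkl']),
        aux_E4 hindep hmeas hpm hhalf _ _ _ _ (by simp [hkl]) (by simp [hkl'])]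
      simp only [Sum.inl.injEq, Sum.inr.injEq, Prod.mk.injEq]
      exact aux_count i i' j j' k l k' l' hkl hkl'
    rw [Finset.sum_congr rfl hval, Finset.sum_add_distrib,
      Finset.sum_ite_eq' T ((i,j),(k,l)) (fun _ => (1:ℝ)),
      Finset.sum_ite_eq' T ((i,j),(l,k)) (fun _ => (1:ℝ)), if_pos ht,
      if_pos (by
        refine Finset.mem_product.mpr ⟨Finset.mem_univ _, Finset.mem_offDiag.mpr ?_⟩
        exact ⟨Finset.mem_univ _, Finset.mem_univ _, hkl.symm⟩)]
    norm_num
  rw [Finset.sum_congr rfl hEYY, Finset.sum_const, nsmul_eq_mul, hT, Finset.card_product,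
    Finset.offDiag_card, Finset.card_univ, Finset.card_univ, Fintype.card_prod,
    Fintype.card_fin, Fintype.card_fin, Fintype.card_fin]
  have hrr : r ≤ r * r := by
    rcases Nat.eq_zero_or_pos r with h | h
    · simp [h]
    · calc r = r * 1 := (mul_one r).symm
        _ ≤ r * r := Nat.mul_le_mul_left r h
  rw [Nat.cast_mul, Nat.cast_sub hrr]
  push_cast
  ring
end

section
/- With σ^A, σ^B jointly i.i.d. Rademacher arrays of shapes N×r and M×r, define W_{ij} = Σ_{k=1}^r σ^A_{ik} σ^B_{jk}. Then P(Σ_{i,j} W_{ij}² ≥ (1/2)·N·M·r) ≥ 1 − 8/(N·M) for every N, M, r ≥ 1. -/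
open MeasureTheory ProbabilityTheory


section Aux

set_option linter.unusedSectionVars false

variable {Ω : Type*} [MeasurableSpace Ω] {μ : Measure Ω} [IsProbabilityMeasure μ]
  {ι : Type*} {σ : ι → Ω → ℝ}

lemma rsb_abs_one (hpm : ∀ idx ω, σ idx ω = 1 ∨ σ idx ω = -1) (idx : ι) (ω : Ω) :
    |σ idx ω| = 1 := by rcases hpm idx ω with h | h <;> simp [h]

lemma rsb_integrable_prod (hmeas : ∀ idx, Measurable (σ idx))
    (hpm : ∀ idx ω, σ idx ω = 1 ∨ σ idx ω = -1) (S : Finset ι) :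
    Integrable (fun ω => ∏ x ∈ S, σ x ω) μ := by
  refine (integrable_const (1 : ℝ)).mono' ?_ ?_
  · exact (Finset.measurable_prod S fun i _ => hmeas i).aestronglyMeasurable
  · refine Filter.Eventually.of_forall fun ω => ?_
    rw [Real.norm_eq_abs, Finset.abs_prod]
    calc ∏ x ∈ S, |σ x ω| = ∏ x ∈ S, 1 :=
          Finset.prod_congr rfl fun x _ => rsb_abs_one hpm x ω
      _ ≤ 1 := by simp

lemma rsb_integral_single (hmeas : ∀ idx, Measurable (σ idx))
    (hpm : ∀ idx ω, σ idx ω = 1 ∨ σ idx ω = -1)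
    (hhalf : ∀ idx, μ {ω | σ idx ω = 1} = 1 / 2) (x : ι) :
    ∫ ω, σ x ω ∂μ = 0 := by
  have hs : MeasurableSet {ω | σ x ω = 1} := hmeas x (measurableSet_singleton 1)
  have hpt : ∀ ω, σ x ω = 2 * Set.indicator {ω | σ x ω = 1} (fun _ => (1:ℝ)) ω - 1 := by
    intro ω
    rcases hpm x ω with h | h
    · rw [Set.indicator_of_mem (by simpa using h), h]; norm_num
    · rw [Set.indicator_of_notMem (by norm_num [h]), h]; norm_num
  have h1 : Integrable (Set.indicator {ω | σ x ω = 1} (fun _ => (1:ℝ))) μ :=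
    (integrable_const (1:ℝ)).indicator hs
  calc ∫ ω, σ x ω ∂μ
      = ∫ ω, (2 * Set.indicator {ω | σ x ω = 1} (fun _ => (1:ℝ)) ω - 1) ∂μ :=
        integral_congr_ae (Filter.Eventually.of_forall hpt)
    _ = 2 * ∫ ω, Set.indicator {ω | σ x ω = 1} (fun _ => (1:ℝ)) ω ∂μ - ∫ _, (1:ℝ) ∂μ := by
        rw [integral_sub (h1.const_mul 2) (integrable_const 1), integral_const_mul]
    _ = 0 := by
        rw [integral_indicator_const _ hs, measureReal_def, hhalf x]
        simp [ENNReal.toReal_div]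

lemma rsb_integral_finset_prod
    (hindep : iIndepFun σ μ)
    (hmeas : ∀ idx, Measurable (σ idx))
    (hpm : ∀ idx ω, σ idx ω = 1 ∨ σ idx ω = -1)
    (hhalf : ∀ idx, μ {ω | σ idx ω = 1} = 1 / 2) {S : Finset ι} (hS : S.Nonempty) :
    ∫ ω, ∏ x ∈ S, σ x ω ∂μ = 0 := by
  classical
  obtain ⟨x, hx⟩ := hS
  have hxe : x ∉ S.erase x := Finset.notMem_erase x S
  have hdep : IndepFun (∏ j ∈ S.erase x, σ j) (σ x) μ :=
    hindep.indepFun_finset_prod_of_notMem hmeas hxe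
  have hins : (fun ω => ∏ y ∈ S, σ y ω) = (∏ y ∈ S.erase x, σ y) * σ x := by
    funext ω
    conv_lhs => rw [← Finset.insert_erase hx]
    rw [Finset.prod_insert hxe, mul_comm]
    simp [Finset.prod_fn]
  have int1 : Integrable (∏ y ∈ S.erase x, σ y) μ := by
    rw [Finset.prod_fn]
    exact rsb_integrable_prod hmeas hpm _
  have int2 : Integrable (σ x) μ :=
    (integrable_const (1:ℝ)).mono' (hmeas x).aestronglyMeasurable
      (Filter.Eventually.of_forall fun ω => by
        rw [Real.norm_eq_abs, rsb_abs_one hpm x ω])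
  have hmul := hdep.integral_mul_eq_mul_integral int1.aestronglyMeasurable int2.aestronglyMeasurable
  rw [hins]
  calc ∫ ω, ((∏ y ∈ S.erase x, σ y) * σ x) ω ∂μ
      = (∫ ω, (∏ y ∈ S.erase x, σ y) ω ∂μ) * ∫ ω, σ x ω ∂μ := hmul
    _ = 0 := by rw [rsb_integral_single hmeas hpm hhalf x, mul_zero]

lemma rsb_integral_multiset_prod [DecidableEq ι]
    (hindep : iIndepFun σ μ)
    (hmeas : ∀ idx, Measurable (σ idx))
    (hpm : ∀ idx ω, σ idx ω = 1 ∨ σ idx ω = -1)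
    (hhalf : ∀ idx, μ {ω | σ idx ω = 1} = 1 / 2) (m : Multiset ι)
    (hodd : ∃ x, ¬ Even (m.count x)) :
    ∫ ω, (m.map (fun x => σ x ω)).prod ∂μ = 0 := by
  have hpt : ∀ ω, (m.map (fun x => σ x ω)).prod
      = ∏ x ∈ m.toFinset.filter (fun x => ¬ Even (m.count x)), σ x ω := by
    intro ω
    rw [Finset.prod_multiset_map_count, Finset.prod_filter]
    refine Finset.prod_congr rfl fun x _ => ?_
    rcases hpm x ω with h | h
    · simp [h]
    · rcases Nat.even_or_odd (m.count x) with he | ho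
      · simp [h, he.neg_one_pow, he]
      · simp [h, ho.neg_one_pow, Nat.not_even_iff_odd.mpr ho]
  obtain ⟨x, hx⟩ := hodd
  have hmem : x ∈ m.toFinset.filter (fun x => ¬ Even (m.count x)) := by
    refine Finset.mem_filter.mpr ⟨Multiset.mem_toFinset.mpr ?_, hx⟩
    by_contra h
    exact hx (by simp [Multiset.count_eq_zero_of_notMem h])
  rw [integral_congr_ae (Filter.Eventually.of_forall hpt),
    rsb_integral_finset_prod hindep hmeas hpm hhalf ⟨x, hmem⟩]

end Aux
/-- Lower bound on the Rademacher signal: with jointly i.i.d. Rademacher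
arrays and `W_{ij} = Σ_k σᴬ_{ik} σᴮ_{jk}`, for every `N, M, r ≥ 1`,
`P(Σ_{ij} W_{ij}² ≥ ½ N M r) ≥ 1 − 8/(N M)`. -/
theorem rademacher_signal_lower_bound
    {Ω : Type*} [MeasurableSpace Ω] (μ : Measure Ω) [IsProbabilityMeasure μ]
    (N M r : ℕ) (hN : 1 ≤ N) (hM : 1 ≤ M) (hr : 1 ≤ r)
    (σ : (Fin N × Fin r) ⊕ (Fin M × Fin r) → Ω → ℝ)
    (hindep : iIndepFun σ μ)
    (hmeas : ∀ idx, Measurable (σ idx))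
    (hpm : ∀ idx ω, σ idx ω = 1 ∨ σ idx ω = -1)
    (hhalf : ∀ idx, μ {ω | σ idx ω = 1} = 1 / 2)
    (W : Fin N → Fin M → Ω → ℝ)
    (hW : ∀ i j ω, W i j ω = ∑ k, σ (Sum.inl (i, k)) ω * σ (Sum.inr (j, k)) ω) :
    ENNReal.ofReal (1 - 8 / (N * M)) ≤
      μ {ω | (N * M * r : ℝ) / 2 ≤ ∑ i, ∑ j, (W i j ω) ^ 2} := by
  classical
  have hsq : ∀ idx ω, σ idx ω * σ idx ω = 1 := fun idx ω => by
    rcases hpm idx ω with h | h <;> simp [h]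
  have habs : ∀ idx ω, |σ idx ω| = 1 := rsb_abs_one hpm
  set K : Finset (Fin r × Fin r) := Finset.univ.offDiag with hK
  set T : Finset ((Fin N × Fin M) × (Fin r × Fin r)) := Finset.univ ×ˢ K with hT
  set F : ((Fin N × Fin M) × (Fin r × Fin r)) → Ω → ℝ := fun t ω =>
    σ (Sum.inl (t.1.1, t.2.1)) ω * σ (Sum.inl (t.1.1, t.2.2)) ω *
      σ (Sum.inr (t.1.2, t.2.1)) ω * σ (Sum.inr (t.1.2, t.2.2)) ω with hF
  set Y : Ω → ℝ := fun ω => ∑ t ∈ T, F t ω with hYdef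
  -- Step A : pointwise decomposition
  have hZ : ∀ ω, ∑ i, ∑ j, W i j ω ^ 2 = (N * M * r : ℝ) + Y ω := by
    intro ω
    have hterm : ∀ (i : Fin N) (j : Fin M),
        W i j ω ^ 2 = (r : ℝ) + ∑ p ∈ K, F ((i, j), p) ω := by
      intro i j
      have e1 : W i j ω ^ 2 = ∑ p ∈ Finset.univ ×ˢ (Finset.univ : Finset (Fin r)),
          F ((i, j), p) ω := by
        rw [hW, sq, Finset.sum_mul_sum, Finset.sum_product]
        refine Finset.sum_congr rfl fun k _ => Finset.sum_congr rfl fun l _ => ?_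
        simp only [hF]
        ring
      rw [e1, ← Finset.diag_union_offDiag (Finset.univ : Finset (Fin r)),
        Finset.sum_union (Finset.disjoint_diag_offDiag _), Finset.sum_diag, ← hK]
      congr 1
      calc ∑ k : Fin r, F ((i, j), (k, k)) ω = ∑ _k : Fin r, (1 : ℝ) := by
            refine Finset.sum_congr rfl fun k _ => ?_
            simp only [hF]
            rw [mul_assoc, hsq (Sum.inr (j, k)) ω, mul_one, hsq (Sum.inl (i, k)) ω]
        _ = (r : ℝ) := by simp
    calc ∑ i, ∑ j, W i j ω ^ 2
        = (∑ _i : Fin N, ∑ _j : Fin M, (r : ℝ)) + Y ω := by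
          simp only [hYdef, hT]
          rw [Finset.sum_product, Fintype.sum_prod_type, ← Finset.sum_add_distrib]
          refine Finset.sum_congr rfl fun i _ => ?_
          rw [← Finset.sum_add_distrib]
          exact Finset.sum_congr rfl fun j _ => hterm i j
      _ = (N * M * r : ℝ) + Y ω := by
          simp only [Finset.sum_const, Finset.card_univ, Fintype.card_fin, nsmul_eq_mul]
          push_cast
          ring
  -- Step B : integrability
  have hFmeas : ∀ t, Measurable (F t) := fun t =>
    (((hmeas _).mul (hmeas _)).mul (hmeas _)).mul (hmeas _)
  have hFabs : ∀ t ω, |F t ω| = 1 := by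
    intro t ω
    simp only [hF, abs_mul, habs, mul_one]
  have hFFint : ∀ t t', Integrable (fun ω => F t ω * F t' ω) μ := by
    intro t t'
    refine (integrable_const (1 : ℝ)).mono' ((hFmeas t).mul (hFmeas t')).aestronglyMeasurable
      (Filter.Eventually.of_forall fun ω => ?_)
    rw [Real.norm_eq_abs, abs_mul, hFabs, hFabs, mul_one]
  have hexp : ∀ ω, Y ω ^ 2 = ∑ p ∈ T, ∑ q ∈ T, F p ω * F q ω := by
    intro ω
    simp only [hYdef]
    rw [sq, Finset.sum_mul_sum]
  have hYsqint : Integrable (fun ω => Y ω ^ 2) μ := by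
    have : (fun ω => Y ω ^ 2) = fun ω => ∑ p ∈ T, ∑ q ∈ T, F p ω * F q ω := funext hexp
    rw [this]
    exact integrable_finset_sum _ fun p _ => integrable_finset_sum _ fun q _ => hFFint p q
  -- Step D : individual expectations
  have hE : ∀ p ∈ T, ∀ q ∈ T, ∫ ω, F p ω * F q ω ∂μ
      = if p.1 = q.1 ∧ (p.2 = q.2 ∨ p.2 = q.2.swap) then (1 : ℝ) else 0 := by
    rintro ⟨⟨i, j⟩, k, l⟩ ht ⟨⟨i', j'⟩, k', l'⟩ ht'
    have hkl : k ≠ l := by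
      rw [hT] at ht
      exact (Finset.mem_offDiag.mp ((Finset.mem_product.mp ht).2)).2.2
    have hkl' : k' ≠ l' := by
      rw [hT] at ht'
      exact (Finset.mem_offDiag.mp ((Finset.mem_product.mp ht').2)).2.2
    dsimp only [Prod.fst, Prod.snd, Prod.swap_prod_mk]
    by_cases hcond : (i, j) = (i', j') ∧ ((k, l) = (k', l') ∨ (k, l) = (l', k'))
    · rw [if_pos hcond]
      obtain ⟨h1, h2⟩ := hcond
      injection h1 with hi hj
      subst hi; subst hj
      have hpt : ∀ ω, F ((i, j), (k, l)) ω * F ((i, j), (k', l')) ω = 1 := by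
        intro ω
        rcases h2 with h | h
        · injection h with ha hb; subst ha; subst hb
          simp only [hF]
          have e : σ (Sum.inl (i, k)) ω * σ (Sum.inl (i, l)) ω * σ (Sum.inr (j, k)) ω *
                σ (Sum.inr (j, l)) ω *
              (σ (Sum.inl (i, k)) ω * σ (Sum.inl (i, l)) ω * σ (Sum.inr (j, k)) ω *
                σ (Sum.inr (j, l)) ω)
              = σ (Sum.inl (i, k)) ω * σ (Sum.inl (i, k)) ω *
                (σ (Sum.inl (i, l)) ω * σ (Sum.inl (i, l)) ω *
                  (σ (Sum.inr (j, k)) ω * σ (Sum.inr (j, k)) ω *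
                    (σ (Sum.inr (j, l)) ω * σ (Sum.inr (j, l)) ω))) := by ring
          rw [e, hsq (Sum.inl (i, k)) ω, hsq (Sum.inl (i, l)) ω, hsq (Sum.inr (j, k)) ω,
            hsq (Sum.inr (j, l)) ω]
          norm_num
        · injection h with ha hb; subst ha; subst hb
          simp only [hF]
          have e : σ (Sum.inl (i, k)) ω * σ (Sum.inl (i, l)) ω * σ (Sum.inr (j, k)) ω *
                σ (Sum.inr (j, l)) ω *
              (σ (Sum.inl (i, l)) ω * σ (Sum.inl (i, k)) ω * σ (Sum.inr (j, l)) ω *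
                σ (Sum.inr (j, k)) ω)
              = σ (Sum.inl (i, k)) ω * σ (Sum.inl (i, k)) ω *
                (σ (Sum.inl (i, l)) ω * σ (Sum.inl (i, l)) ω *
                  (σ (Sum.inr (j, k)) ω * σ (Sum.inr (j, k)) ω *
                    (σ (Sum.inr (j, l)) ω * σ (Sum.inr (j, l)) ω))) := by ring
          rw [e, hsq (Sum.inl (i, k)) ω, hsq (Sum.inl (i, l)) ω, hsq (Sum.inr (j, k)) ω,
            hsq (Sum.inr (j, l)) ω]
          norm_num
      rw [integral_congr_ae (Filter.Eventually.of_forall hpt)]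
      simp
    · rw [if_neg hcond]
      set m : Multiset ((Fin N × Fin r) ⊕ (Fin M × Fin r)) :=
        {Sum.inl (i, k), Sum.inl (i, l), Sum.inr (j, k), Sum.inr (j, l),
          Sum.inl (i', k'), Sum.inl (i', l'), Sum.inr (j', k'), Sum.inr (j', l')} with hm
      have hprod : ∀ ω, F ((i, j), (k, l)) ω * F ((i', j'), (k', l')) ω
          = (m.map (fun x => σ x ω)).prod := by
        intro ω
        simp only [hm, hF, Multiset.insert_eq_cons, Multiset.map_cons, Multiset.map_singleton,
          Multiset.prod_cons, Multiset.prod_singleton]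
        ring
      rw [integral_congr_ae (Filter.Eventually.of_forall hprod)]
      refine rsb_integral_multiset_prod hindep hmeas hpm hhalf m ?_
      push_neg at hcond
      by_cases hi : i = i'
      · subst hi
        by_cases hj : j = j'
        · subst hj
          obtain ⟨hp1, hp2⟩ := hcond rfl
          by_cases hk : k = k'
          · subst hk
            have hll' : l ≠ l' := fun h => hp1 (by rw [h])
            refine ⟨Sum.inl (i, l), ?_⟩
            simp [hm, Multiset.insert_eq_cons, Multiset.count_cons, Multiset.count_singleton,
              Ne.symm hkl, hll']
          · by_cases hk2 : k = l'
            · subst hk2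
              have hlk' : l ≠ k' := fun h => hp2 (by rw [h])
              refine ⟨Sum.inl (i, l), ?_⟩
              simp [hm, Multiset.insert_eq_cons, Multiset.count_cons, Multiset.count_singleton,
                Ne.symm hkl, hlk', hkl']
            · refine ⟨Sum.inl (i, k), ?_⟩
              simp [hm, Multiset.insert_eq_cons, Multiset.count_cons, Multiset.count_singleton,
                hkl, hk, hk2]
        · refine ⟨Sum.inr (j, k), ?_⟩
          simp [hm, Multiset.insert_eq_cons, Multiset.count_cons, Multiset.count_singleton,
            hkl, hj]
      · refine ⟨Sum.inl (i, k), ?_⟩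
        simp [hm, Multiset.insert_eq_cons, Multiset.count_cons, Multiset.count_singleton,
          hkl, hi]
  -- Step E : second moment
  have hIY : ∫ ω, Y ω ^ 2 ∂μ
      = ∑ p ∈ T, ∑ q ∈ T,
          (if p.1 = q.1 ∧ (p.2 = q.2 ∨ p.2 = q.2.swap) then (1 : ℝ) else 0) := by
    calc ∫ ω, Y ω ^ 2 ∂μ = ∫ ω, ∑ p ∈ T, ∑ q ∈ T, F p ω * F q ω ∂μ :=
          integral_congr_ae (Filter.Eventually.of_forall hexp)
      _ = ∑ p ∈ T, ∫ ω, ∑ q ∈ T, F p ω * F q ω ∂μ :=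
          integral_finset_sum T fun p _ => integrable_finset_sum T fun q _ => hFFint p q
      _ = ∑ p ∈ T, ∑ q ∈ T, ∫ ω, F p ω * F q ω ∂μ :=
          Finset.sum_congr rfl fun p _ => integral_finset_sum T fun q _ => hFFint p q
      _ = _ := Finset.sum_congr rfl fun p hp => Finset.sum_congr rfl fun q hq => hE p hp q hq
  -- Step F : counting
  have hcount : ∀ p ∈ T,
      (∑ q ∈ T, if p.1 = q.1 ∧ (p.2 = q.2 ∨ p.2 = q.2.swap) then (1 : ℝ) else 0) = 2 := by
    intro p hp
    have hpne : p.2.1 ≠ p.2.2 := by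
      rw [hT] at hp
      exact (Finset.mem_offDiag.mp ((Finset.mem_product.mp hp).2)).2.2
    have hswapne : p.2 ≠ p.2.swap := fun h =>
      hpne (by simpa using congrArg Prod.fst h)
    have hfil : T.filter (fun q => p.1 = q.1 ∧ (p.2 = q.2 ∨ p.2 = q.2.swap))
        = {(p.1, p.2), (p.1, p.2.swap)} := by
      ext ⟨x, y⟩
      simp only [Finset.mem_filter, hT, Finset.mem_product, Finset.mem_univ, true_and,
        hK, Finset.mem_offDiag, Finset.mem_insert, Finset.mem_singleton, Prod.mk.injEq]
      constructor
      · rintro ⟨-, hx, hor⟩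
        rcases hor with h | h
        · exact Or.inl ⟨hx.symm, h.symm⟩
        · exact Or.inr ⟨hx.symm, by rw [h, Prod.swap_swap]⟩
      · rintro (⟨hx, hy⟩ | ⟨hx, hy⟩)
        · subst hx; subst hy
          exact ⟨hpne, rfl, Or.inl rfl⟩
        · subst hx; subst hy
          exact ⟨by simpa using hpne.symm, rfl, Or.inr rfl⟩
    have hnotmem : (p.1, p.2) ∉ ({(p.1, p.2.swap)} : Finset ((Fin N × Fin M) × Fin r × Fin r)) := by
      simp only [Finset.mem_singleton]
      intro h
      exact hswapne (congrArg Prod.snd h)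
    rw [Finset.sum_boole, hfil, Finset.card_insert_of_notMem hnotmem, Finset.card_singleton]
    norm_num
  have hIYle : ∫ ω, Y ω ^ 2 ∂μ ≤ 2 * ((N : ℝ) * M * r * r) := by
    rw [hIY, Finset.sum_congr rfl hcount, Finset.sum_const, nsmul_eq_mul, hT,
      Finset.card_product, Finset.card_univ, hK, Finset.offDiag_card, Finset.card_univ,
      Fintype.card_prod, Fintype.card_fin, Fintype.card_fin, Fintype.card_fin]
    have hrr : r ≤ r * r := Nat.le_mul_of_pos_left r (by omega)
    push_cast [Nat.cast_sub hrr]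
    have hN0 : (0 : ℝ) ≤ (N : ℝ) := Nat.cast_nonneg N
    have hM0 : (0 : ℝ) ≤ (M : ℝ) := Nat.cast_nonneg M
    have hr0 : (0 : ℝ) ≤ (r : ℝ) := Nat.cast_nonneg r
    nlinarith [mul_nonneg hN0 hM0, mul_nonneg (mul_nonneg hN0 hM0) hr0]
  -- Step G : Chebyshev and conclusion
  have hNpos : (0 : ℝ) < N := by exact_mod_cast Nat.lt_of_lt_of_le Nat.zero_lt_one hN
  have hMpos : (0 : ℝ) < M := by exact_mod_cast Nat.lt_of_lt_of_le Nat.zero_lt_one hM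
  have hrpos : (0 : ℝ) < r := by exact_mod_cast Nat.lt_of_lt_of_le Nat.zero_lt_one hr
  have hcpos : (0 : ℝ) < (N : ℝ) * M * r := by positivity
  set B : Set Ω := {ω | ((N : ℝ) * M * r / 2) ^ 2 ≤ Y ω ^ 2} with hB
  have hYmeas : Measurable Y := by
    rw [hYdef]
    exact Finset.measurable_sum T fun t _ => hFmeas t
  have hBmeas : MeasurableSet B :=
    measurableSet_le measurable_const (hYmeas.pow_const 2)
  have hmark := mul_meas_ge_le_integral_of_nonneg
    (Filter.Eventually.of_forall fun ω => sq_nonneg (Y ω)) hYsqint (((N : ℝ) * M * r / 2) ^ 2)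
  have htoReal : (μ B).toReal ≤ 8 / ((N : ℝ) * M) := by
    have h1 : (μ B).toReal ≤ 2 * ((N : ℝ) * M * r * r) / ((N : ℝ) * M * r / 2) ^ 2 := by
      rw [le_div_iff₀ (by positivity)]
      calc (μ B).toReal * ((N : ℝ) * M * r / 2) ^ 2
          = ((N : ℝ) * M * r / 2) ^ 2 * (μ B).toReal := mul_comm _ _
        _ ≤ ∫ ω, Y ω ^ 2 ∂μ := hmark
        _ ≤ 2 * ((N : ℝ) * M * r * r) := hIYle
    have h2 : 2 * ((N : ℝ) * M * r * r) / ((N : ℝ) * M * r / 2) ^ 2 = 8 / ((N : ℝ) * M) := by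
      rw [div_eq_div_iff (by positivity) (by positivity)]
      ring
    rw [h2] at h1
    exact h1
  have hμB : μ B ≤ ENNReal.ofReal (8 / ((N : ℝ) * M)) := by
    rw [← ENNReal.ofReal_toReal (measure_ne_top μ B)]
    exact ENNReal.ofReal_le_ofReal htoReal
  have hsub : Bᶜ ⊆ {ω | (N * M * r : ℝ) / 2 ≤ ∑ i, ∑ j, (W i j ω) ^ 2} := by
    intro ω hω
    simp only [hB, Set.mem_compl_iff, Set.mem_setOf_eq, not_le] at hω
    simp only [Set.mem_setOf_eq]
    rw [hZ ω]
    nlinarith [sq_nonneg (Y ω + (N : ℝ) * M * r / 2), hcpos, mul_pos hcpos hcpos]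
  calc ENNReal.ofReal (1 - 8 / (N * M))
      = 1 - ENNReal.ofReal (8 / ((N : ℝ) * M)) := by
        rw [ENNReal.ofReal_sub _ (by positivity), ENNReal.ofReal_one]
    _ ≤ 1 - μ B := tsub_le_tsub_left hμB 1
    _ = μ Bᶜ := (prob_compl_eq_one_sub hBmeas).symm
    _ ≤ μ {ω | (N * M * r : ℝ) / 2 ≤ ∑ i, ∑ j, (W i j ω) ^ 2} := measure_mono hsub
end
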